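/- Let λ < 0 and 0 < δ < -λ, and let h : (-∞, 0] → ℝ be a measurable function with M² := ∫_{-∞}^0 e^{-2δσ} h(σ)² dσ < ∞. Define u(τ) := -∫_τ^0 e^{λ(σ - τ)} h(σ) dσ. Then: (a) u is locally absolutely continuous, u(0) = 0, and u'(τ) = -λ u(τ) + h(τ) for almost every τ ≤ 0; (b) |u(τ)| ≤ (2(-λ - δ))^{-1/2} e^{δτ} M for all τ ≤ 0. -/

import Mathlib

open MeasureTheory Filter Set

lemma stmt5_aux_lebesgue (f : ℝ → ℝ) (hf : LocallyIntegrable f volume) (a : ℝ) :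
    ∀ᵐ x : ℝ, HasDerivAt (fun t => ∫ s in a..t, f s) (f x) x := by
  filter_upwards [IsUnifLocDoublingMeasure.ae_tendsto_average_norm_sub (μ := volume) hf 1] with x hx
  have hii : ∀ c d : ℝ, IntervalIntegrable f volume c d := fun c d =>
    (hf.integrableOn_isCompact isCompact_uIcc).intervalIntegrable
  have havg : Tendsto (fun t : ℝ => ⨍ y in Metric.closedBall x |t - x|, ‖f y - f x‖)
      (nhdsWithin x {x}ᶜ) (nhds 0) := by
    apply hx (fun _ => x) (fun t => |t - x|)
    · rw [tendsto_nhdsWithin_iff]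
      constructor
      · have : Tendsto (fun t : ℝ => |t - x|) (nhds x) (nhds |x - x|) :=
          ((continuous_id.sub continuous_const).abs.tendsto x)
        simpa using this.mono_left nhdsWithin_le_nhds
      · filter_upwards [self_mem_nhdsWithin] with t ht
        exact abs_pos.mpr (sub_ne_zero.mpr ht)
    · filter_upwards with t
      simp [Metric.mem_closedBall, dist_self]
  rw [hasDerivAt_iff_tendsto_slope]
  rw [← tendsto_sub_nhds_zero_iff]
  have h2 : Tendsto (fun t : ℝ => 2 * ⨍ y in Metric.closedBall x |t - x|, ‖f y - f x‖)
      (nhdsWithin x {x}ᶜ) (nhds 0) := by simpa using havg.const_mul 2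
  apply squeeze_zero_norm' _ h2
  filter_upwards [self_mem_nhdsWithin] with t ht
  have htx : t ≠ x := ht
  have habs : (0:ℝ) < |t - x| := abs_pos.mpr (sub_ne_zero.mpr htx)
  have hFt : (∫ s in a..t, f s) - ∫ s in a..x, f s = ∫ s in x..t, f s :=
    intervalIntegral.integral_interval_sub_left (hii a t) (hii a x)
  have hslope : slope (fun t => ∫ s in a..t, f s) x t - f x
      = (∫ s in x..t, (f s - f x)) / (t - x) := by
    rw [slope_def_field, hFt,
      intervalIntegral.integral_sub (hii x t) intervalIntegrable_const,
      intervalIntegral.integral_const, smul_eq_mul, sub_div,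
      mul_div_cancel_left₀ _ (sub_ne_zero.mpr htx)]
  have hsub : Set.uIoc x t ⊆ Metric.closedBall x |t - x| := by
    intro y hy
    rw [Set.mem_uIoc] at hy
    rw [Metric.mem_closedBall, Real.dist_eq, abs_le]
    have h1 : t - x ≤ |t - x| := le_abs_self _
    have h2 : -(t - x) ≤ |t - x| := neg_le_abs _
    rcases hy with ⟨ha, hb⟩ | ⟨ha, hb⟩ <;> constructor <;> linarith
  have hint : IntegrableOn (fun y => ‖f y - f x‖) (Metric.closedBall x |t - x|) volume := by
    apply Integrable.norm
    exact (hf.integrableOn_isCompact (isCompact_closedBall x _)).sub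
      ((integrableOn_const_iff (C := f x)).mpr (Or.inr (by
        rw [Real.volume_closedBall]; exact ENNReal.ofReal_lt_top)))
  have hbound : ‖∫ s in x..t, (f s - f x)‖ ≤ ∫ y in Metric.closedBall x |t - x|, ‖f y - f x‖ := by
    refine le_trans (intervalIntegral.norm_integral_le_integral_norm_uIoc) ?_
    apply setIntegral_mono_set hint
    · filter_upwards with y using norm_nonneg _
    · exact HasSubset.Subset.eventuallyLE hsub
  have hcb : (volume (Metric.closedBall x |t - x|)).toReal = 2 * |t - x| := by
    rw [Real.volume_closedBall, ENNReal.toReal_ofReal (by positivity)]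
  have havg_eq : (∫ y in Metric.closedBall x |t - x|, ‖f y - f x‖)
      = (2 * |t - x|) * ⨍ y in Metric.closedBall x |t - x|, ‖f y - f x‖ := by
    rw [setAverage_eq, measureReal_def, hcb, smul_eq_mul]
    rw [← mul_assoc, mul_inv_cancel₀ (by positivity), one_mul]
  have hin : (0:ℝ) ≤ ∫ y in Metric.closedBall x |t - x|, ‖f y - f x‖ :=
    setIntegral_nonneg measurableSet_closedBall (fun y _ => norm_nonneg _)
  rw [hslope, norm_div, Real.norm_eq_abs (t - x), div_le_iff₀ habs]
  calc ‖∫ s in x..t, (f s - f x)‖ ≤ ∫ y in Metric.closedBall x |t - x|, ‖f y - f x‖ := hbound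
    _ = (2 * ⨍ y in Metric.closedBall x |t - x|, ‖f y - f x‖) * |t - x| := by
        rw [havg_eq]; ring

/-- Backward Duhamel formula along a negative eigenvalue `λ < 0` with `0 < δ < -λ`:
`u(τ) = -∫_τ^0 e^{λ(σ-τ)} h(σ) dσ` vanishes at `τ = 0`, is absolutely continuous
with `u' = -λ u + h` a.e. (equivalently in integrated form), and decays like `e^{δτ}`. -/
theorem stmt5 (lam δ : ℝ) (hlam : lam < 0) (hδ : 0 < δ) (hδlam : δ < -lam)
    (h : ℝ → ℝ) (hmeas : Measurable h) (M : ℝ) (hM : 0 ≤ M)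
    (hfin : IntegrableOn (fun σ => Real.exp (-2 * δ * σ) * (h σ) ^ 2) (Set.Iic 0))
    (hM2 : (∫ σ in Set.Iic (0:ℝ), Real.exp (-2 * δ * σ) * (h σ) ^ 2) = M ^ 2)
    (u : ℝ → ℝ)
    (hu : ∀ τ : ℝ, u τ = -∫ σ in Set.Ioc τ 0, Real.exp (lam * (σ - τ)) * h σ) :
    u 0 = 0 ∧
    (∀ τ₁ τ₂ : ℝ, τ₁ ≤ τ₂ → τ₂ ≤ 0 →
      u τ₂ - u τ₁ = ∫ s in Set.Ioc τ₁ τ₂, (-lam * u s + h s)) ∧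
    (∀ᵐ τ : ℝ, τ ≤ (0:ℝ) → HasDerivAt u (-lam * u τ + h τ) τ) ∧
    (∀ τ ≤ (0:ℝ), |u τ| ≤ (2 * (-lam - δ)) ^ (-(1:ℝ)/2) * Real.exp (δ * τ) * M) := by
  have hφm : Measurable (fun σ => Real.exp (-δ * σ) * h σ) :=
    ((Real.measurable_exp.comp (measurable_id.const_mul (-δ)))).mul hmeas
  have hφsqeq : (fun σ => (Real.exp (-δ * σ) * h σ) ^ 2)
      = (fun σ => Real.exp (-2 * δ * σ) * h σ ^ 2) := by
    funext σ
    rw [mul_pow, sq (Real.exp _), ← Real.exp_add]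
    ring_nf
  have hφsq : IntegrableOn (fun σ => (Real.exp (-δ * σ) * h σ) ^ 2) (Set.Iic 0) := by
    rw [hφsqeq]; exact hfin
  -- key integrability lemma
  have hfinmeas : ∀ a b : ℝ, IsFiniteMeasure (volume.restrict (Set.Ioc a b)) := by
    intro a b
    constructor
    rw [Measure.restrict_apply_univ, Real.volume_Ioc]
    exact ENNReal.ofReal_lt_top
  have hkey : ∀ (c a b : ℝ), b ≤ 0 →
      IntegrableOn (fun σ => Real.exp (c * σ) * h σ) (Set.Ioc a b) := by
    intro c a b hb
    have hsub : Set.Ioc a b ⊆ Set.Iic 0 := fun x hx => le_trans hx.2 hb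
    have hφ2 : IntegrableOn (fun σ => (Real.exp (-δ * σ) * h σ) ^ 2) (Set.Ioc a b) :=
      hφsq.mono_set hsub
    haveI := hfinmeas a b
    have hmem : MemLp (fun σ => Real.exp (-δ * σ) * h σ) 2 (volume.restrict (Set.Ioc a b)) :=
      (memLp_two_iff_integrable_sq hφm.aestronglyMeasurable).mpr hφ2
    have hφint : IntegrableOn (fun σ => Real.exp (-δ * σ) * h σ) (Set.Ioc a b) :=
      hmem.integrable (by norm_num)
    apply Integrable.mono' ((hφint.abs).const_mul (Real.exp (|c| * (|a| ⊔ |b|))))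
      (((Real.measurable_exp.comp (measurable_id.const_mul c)).mul hmeas).aestronglyMeasurable)
    rw [ae_restrict_iff' measurableSet_Ioc]
    filter_upwards with σ hσ
    have hσ0 : σ ≤ 0 := le_trans hσ.2 hb
    have h1 : |h σ| ≤ |Real.exp (-δ * σ) * h σ| := by
      rw [abs_mul, abs_of_pos (Real.exp_pos _)]
      have : (1:ℝ) ≤ Real.exp (-δ * σ) := Real.one_le_exp (by nlinarith)
      nlinarith [abs_nonneg (h σ)]
    have h2 : Real.exp (c * σ) ≤ Real.exp (|c| * (|a| ⊔ |b|)) := by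
      apply Real.exp_le_exp.mpr
      have hσab : |σ| ≤ |a| ⊔ |b| := by
        rw [abs_le]
        constructor
        · have := neg_abs_le a; have := le_max_left |a| |b|; linarith [hσ.1]
        · have := le_abs_self b; have := le_max_right |a| |b|; linarith [hσ.2]
      calc c * σ ≤ |c * σ| := le_abs_self _
        _ = |c| * |σ| := abs_mul _ _
        _ ≤ |c| * (|a| ⊔ |b|) := mul_le_mul_of_nonneg_left hσab (abs_nonneg c)
    calc ‖Real.exp (c * σ) * h σ‖ = Real.exp (c * σ) * |h σ| := by
          rw [Real.norm_eq_abs, abs_mul, abs_of_pos (Real.exp_pos _)]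
      _ ≤ Real.exp (|c| * (|a| ⊔ |b|)) * |Real.exp (-δ * σ) * h σ| := by
          apply mul_le_mul h2 h1 (abs_nonneg _) (Real.exp_pos _).le
  have hg : ∀ a b : ℝ, b ≤ 0 →
      IntegrableOn (fun σ => Real.exp (lam * σ) * h σ) (Set.Ioc a b) := hkey lam
  have hh : ∀ a b : ℝ, b ≤ 0 → IntegrableOn h (Set.Ioc a b) := by
    intro a b hb
    have := hkey 0 a b hb
    simpa using this
  have hu' : ∀ τ : ℝ, u τ
      = -(Real.exp (-(lam * τ)) * ∫ σ in Set.Ioc τ 0, Real.exp (lam * σ) * h σ) := by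
    intro τ
    rw [hu τ]
    congr 1
    rw [← integral_const_mul]
    apply integral_congr_ae
    filter_upwards with σ
    rw [← mul_assoc, ← Real.exp_add]
    ring_nf
  refine ⟨?_, ?_, ?_, ?_⟩
  · rw [hu 0]; simp
  · -- Part 2: integrated form (Fubini)
    intro τ₁ τ₂ h12 h20
    have h10 : τ₁ ≤ (0:ℝ) := le_trans h12 h20
    haveI := hfinmeas τ₁ τ₂
    haveI := hfinmeas τ₁ 0
    set k : ℝ → ℝ → ℝ := fun s σ =>
      if s < σ then lam * (Real.exp (-(lam * s)) * (Real.exp (lam * σ) * h σ)) else 0 with hk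
    -- measurability
    have hkm : Measurable (Function.uncurry k) := by
      show Measurable fun p : ℝ × ℝ =>
        if p.1 < p.2 then lam * (Real.exp (-(lam * p.1)) * (Real.exp (lam * p.2) * h p.2)) else 0
      apply Measurable.ite (measurableSet_lt measurable_fst measurable_snd)
      · exact measurable_const.mul
          ((Real.measurable_exp.comp ((measurable_fst.const_mul lam).neg)).mul
            ((Real.measurable_exp.comp (measurable_snd.const_mul lam)).mul
              (hmeas.comp measurable_snd)))
      · exact measurable_const
    set C := Real.exp (|lam| * |τ₁|) with hC
    have hCpos : 0 < C := Real.exp_pos _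
    have hbint : Integrable (fun p : ℝ × ℝ => (|lam| * (C * C)) * |h p.2|)
        ((volume.restrict (Set.Ioc τ₁ τ₂)).prod (volume.restrict (Set.Ioc τ₁ 0))) := by
      have h1 : Integrable (fun _ : ℝ => |lam| * (C * C)) (volume.restrict (Set.Ioc τ₁ τ₂)) :=
        integrable_const _
      have h2 : Integrable (fun σ : ℝ => |h σ|) (volume.restrict (Set.Ioc τ₁ 0)) :=
        (hh τ₁ 0 le_rfl).abs
      simpa using h1.mul_prod h2
    have habs_le : ∀ x : ℝ, τ₁ ≤ x → x ≤ 0 → |x| ≤ |τ₁| := by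
      intro x h1 h2
      rw [abs_of_nonpos h2, abs_of_nonpos (le_trans h1 h2)]
      linarith
    have hkint : Integrable (Function.uncurry k)
        ((volume.restrict (Set.Ioc τ₁ τ₂)).prod (volume.restrict (Set.Ioc τ₁ 0))) := by
      apply Integrable.mono' hbint hkm.aestronglyMeasurable
      rw [Measure.prod_restrict, ae_restrict_iff' (measurableSet_Ioc.prod measurableSet_Ioc)]
      filter_upwards with p hp
      obtain ⟨hp1, hp2⟩ := hp
      show ‖k p.1 p.2‖ ≤ |lam| * (C * C) * |h p.2|
      rw [hk]
      by_cases hlt : p.1 < p.2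
      · simp only [if_pos hlt]
        rw [Real.norm_eq_abs, abs_mul, abs_mul, abs_mul, abs_of_pos (Real.exp_pos _),
          abs_of_pos (Real.exp_pos _)]
        have e1 : Real.exp (-(lam * p.1)) ≤ C := by
          rw [hC]
          apply Real.exp_le_exp.mpr
          calc -(lam * p.1) ≤ |lam * p.1| := neg_le_abs _
            _ = |lam| * |p.1| := abs_mul _ _
            _ ≤ |lam| * |τ₁| := mul_le_mul_of_nonneg_left
                (habs_le _ (le_of_lt hp1.1) (le_trans hp1.2 h20)) (abs_nonneg _)
        have e2 : Real.exp (lam * p.2) ≤ C := by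
          rw [hC]
          apply Real.exp_le_exp.mpr
          calc lam * p.2 ≤ |lam * p.2| := le_abs_self _
            _ = |lam| * |p.2| := abs_mul _ _
            _ ≤ |lam| * |τ₁| := mul_le_mul_of_nonneg_left
                (habs_le _ (le_of_lt hp2.1) hp2.2) (abs_nonneg _)
        have e3 : Real.exp (-(lam * p.1)) * (Real.exp (lam * p.2) * |h p.2|)
            ≤ C * (C * |h p.2|) := by
          apply mul_le_mul e1 (mul_le_mul e2 le_rfl (abs_nonneg _) hCpos.le)
            (by positivity) hCpos.le
        calc |lam| * (Real.exp (-(lam * p.1)) * (Real.exp (lam * p.2) * |h p.2|))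
            ≤ |lam| * (C * (C * |h p.2|)) := mul_le_mul_of_nonneg_left e3 (abs_nonneg lam)
          _ = |lam| * (C * C) * |h p.2| := by ring
      · simp only [if_neg hlt, norm_zero]
        positivity
    have hswap : (∫ s in Set.Ioc τ₁ τ₂, ∫ σ in Set.Ioc τ₁ 0, k s σ)
        = ∫ σ in Set.Ioc τ₁ 0, ∫ s in Set.Ioc τ₁ τ₂, k s σ := integral_integral_swap hkint
    -- step A : inner integral over σ identifies -lam * u s
    have hA : ∀ s ∈ Set.Ioc τ₁ τ₂, (∫ σ in Set.Ioc τ₁ 0, k s σ) = -lam * u s := by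
      intro s hs
      have hseq : ∀ σ : ℝ, k s σ = Set.indicator (Set.Ioi s)
          (fun σ => lam * (Real.exp (-(lam * s)) * (Real.exp (lam * σ) * h σ))) σ := by
        intro σ
        rw [Set.indicator_apply, hk]
        simp only [Set.mem_Ioi]
      rw [integral_congr_ae (Eventually.of_forall hseq), setIntegral_indicator measurableSet_Ioi]
      have hJI : Set.Ioc τ₁ 0 ∩ Set.Ioi s = Set.Ioc s 0 := by
        rw [Set.Ioc_inter_Ioi, sup_eq_right.mpr (le_of_lt hs.1)]
      rw [hJI, integral_const_mul, integral_const_mul, hu' s]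
      ring
    have hIu : IntegrableOn (fun s => -lam * u s) (Set.Ioc τ₁ τ₂) := by
      have h1 := hkint.integral_prod_left
      apply h1.congr
      filter_upwards [ae_restrict_mem measurableSet_Ioc] with s hs
      exact hA s hs
    have hInner : IntegrableOn (fun σ => ∫ s in Set.Ioc τ₁ τ₂, k s σ) (Set.Ioc τ₁ 0) :=
      hkint.integral_prod_right
    have hIh := hh τ₁ τ₂ h20
    have hgI := hg τ₁ τ₂ h20
    have hg2 := hg τ₂ 0 le_rfl
    have hUnion : Set.Ioc τ₁ τ₂ ∪ Set.Ioc τ₂ 0 = Set.Ioc τ₁ (0:ℝ) :=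
      Set.Ioc_union_Ioc_eq_Ioc h12 h20
    have hdisj : Disjoint (Set.Ioc τ₁ τ₂) (Set.Ioc τ₂ (0:ℝ)) := Set.Ioc_disjoint_Ioc_of_le le_rfl
    have hsplit : (∫ σ in Set.Ioc τ₁ 0, ∫ s in Set.Ioc τ₁ τ₂, k s σ)
        = (∫ σ in Set.Ioc τ₁ τ₂, ∫ s in Set.Ioc τ₁ τ₂, k s σ)
          + ∫ σ in Set.Ioc τ₂ 0, ∫ s in Set.Ioc τ₁ τ₂, k s σ := by
      conv_lhs => rw [← hUnion]
      exact setIntegral_union hdisj measurableSet_Ioc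
        (hInner.mono_set (fun x hx => ⟨hx.1, le_trans hx.2 h20⟩))
        (hInner.mono_set (fun x hx => ⟨lt_of_le_of_lt h12 hx.1, hx.2⟩))
    have hexpint : ∀ a b : ℝ, a ≤ b → (∫ s in Set.Ioc a b, Real.exp (-(lam * s)))
        = (Real.exp (-(lam * b)) - Real.exp (-(lam * a))) / (-lam) := by
      intro a b hab
      rw [← intervalIntegral.integral_of_le hab]
      have e : ∀ s : ℝ, Real.exp (-(lam * s)) = Real.exp ((-lam) * s) := by
        intro s; congr 1; ring
      simp only [e]
      rw [intervalIntegral.integral_comp_mul_left (fun x => Real.exp x)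
        (ne_of_gt (by linarith : (0:ℝ) < -lam))]
      rw [integral_exp, smul_eq_mul, inv_mul_eq_div]
    have hlam0 : lam ≠ 0 := ne_of_lt hlam
    have hIin1 : ∀ σ ∈ Set.Ioc τ₁ τ₂, (∫ s in Set.Ioc τ₁ τ₂, k s σ)
        = Real.exp (-(lam * τ₁)) * (Real.exp (lam * σ) * h σ) - h σ := by
      intro σ hσ
      have hseq : ∀ s : ℝ, k s σ = Set.indicator (Set.Iio σ)
          (fun s => lam * (Real.exp (-(lam * s)) * (Real.exp (lam * σ) * h σ))) s := by
        intro s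
        rw [Set.indicator_apply, hk]
        simp only [Set.mem_Iio]
      rw [integral_congr_ae (Eventually.of_forall hseq), setIntegral_indicator measurableSet_Iio]
      have hint : Set.Ioc τ₁ τ₂ ∩ Set.Iio σ = Set.Ioo τ₁ σ := by
        ext x
        simp only [Set.mem_inter_iff, Set.mem_Ioc, Set.mem_Iio, Set.mem_Ioo]
        constructor
        · rintro ⟨⟨a1, _⟩, a3⟩; exact ⟨a1, a3⟩
        · rintro ⟨a1, a3⟩; exact ⟨⟨a1, le_trans (le_of_lt a3) hσ.2⟩, a3⟩
      rw [hint, ← integral_Ioc_eq_integral_Ioo]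
      have e : ∀ s : ℝ, lam * (Real.exp (-(lam * s)) * (Real.exp (lam * σ) * h σ))
          = (lam * (Real.exp (lam * σ) * h σ)) * Real.exp (-(lam * s)) := by
        intro s; ring
      simp only [e]
      rw [integral_const_mul, hexpint τ₁ σ (le_of_lt hσ.1)]
      have hAX : (Real.exp (lam * σ) * h σ) * Real.exp (-(lam * σ)) = h σ := by
        rw [mul_comm (Real.exp (lam * σ)) (h σ), mul_assoc, ← Real.exp_add,
          show lam * σ + -(lam * σ) = 0 by ring, Real.exp_zero, mul_one]
      have expand : (lam * (Real.exp (lam * σ) * h σ))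
            * ((Real.exp (-(lam * σ)) - Real.exp (-(lam * τ₁))) / (-lam))
          = -((Real.exp (lam * σ) * h σ) * Real.exp (-(lam * σ)))
            + (Real.exp (lam * σ) * h σ) * Real.exp (-(lam * τ₁)) := by
        field_simp [hlam0]
        ring
      rw [expand, hAX]
      ring
    have hIin2 : ∀ σ ∈ Set.Ioc τ₂ (0:ℝ), (∫ s in Set.Ioc τ₁ τ₂, k s σ)
        = Real.exp (-(lam * τ₁)) * (Real.exp (lam * σ) * h σ)
          - Real.exp (-(lam * τ₂)) * (Real.exp (lam * σ) * h σ) := by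
      intro σ hσ
      have hseq : ∀ s : ℝ, k s σ = Set.indicator (Set.Iio σ)
          (fun s => lam * (Real.exp (-(lam * s)) * (Real.exp (lam * σ) * h σ))) s := by
        intro s
        rw [Set.indicator_apply, hk]
        simp only [Set.mem_Iio]
      rw [integral_congr_ae (Eventually.of_forall hseq), setIntegral_indicator measurableSet_Iio]
      have hint : Set.Ioc τ₁ τ₂ ∩ Set.Iio σ = Set.Ioc τ₁ τ₂ :=
        Set.inter_eq_self_of_subset_left (fun x hx => lt_of_le_of_lt hx.2 hσ.1)
      rw [hint]
      have e : ∀ s : ℝ, lam * (Real.exp (-(lam * s)) * (Real.exp (lam * σ) * h σ))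
          = (lam * (Real.exp (lam * σ) * h σ)) * Real.exp (-(lam * s)) := by
        intro s; ring
      simp only [e]
      rw [integral_const_mul, hexpint τ₁ τ₂ h12]
      field_simp [hlam0]
      ring
    have hA1 : (∫ σ in Set.Ioc τ₁ τ₂, ∫ s in Set.Ioc τ₁ τ₂, k s σ)
        = Real.exp (-(lam * τ₁)) * (∫ σ in Set.Ioc τ₁ τ₂, Real.exp (lam * σ) * h σ)
          - ∫ σ in Set.Ioc τ₁ τ₂, h σ := by
      rw [setIntegral_congr_fun measurableSet_Ioc hIin1]
      rw [integral_sub (hgI.const_mul _) hIh, integral_const_mul]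
    have hA2 : (∫ σ in Set.Ioc τ₂ 0, ∫ s in Set.Ioc τ₁ τ₂, k s σ)
        = Real.exp (-(lam * τ₁)) * (∫ σ in Set.Ioc τ₂ 0, Real.exp (lam * σ) * h σ)
          - Real.exp (-(lam * τ₂)) * (∫ σ in Set.Ioc τ₂ 0, Real.exp (lam * σ) * h σ) := by
      rw [setIntegral_congr_fun measurableSet_Ioc hIin2]
      rw [integral_sub (hg2.const_mul _) (hg2.const_mul _), integral_const_mul, integral_const_mul]
    have hJg : (∫ σ in Set.Ioc τ₁ 0, Real.exp (lam * σ) * h σ)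
        = (∫ σ in Set.Ioc τ₁ τ₂, Real.exp (lam * σ) * h σ)
          + ∫ σ in Set.Ioc τ₂ 0, Real.exp (lam * σ) * h σ := by
      conv_lhs => rw [← hUnion]
      exact setIntegral_union hdisj measurableSet_Ioc hgI hg2
    have e1 : (∫ s in Set.Ioc τ₁ τ₂, -lam * u s)
        = ∫ s in Set.Ioc τ₁ τ₂, (∫ σ in Set.Ioc τ₁ 0, k s σ) :=
      setIntegral_congr_fun measurableSet_Ioc (fun s hs => (hA s hs).symm)
    rw [integral_add hIu hIh, e1, hswap, hsplit, hA1, hA2, hu' τ₁, hu' τ₂, hJg]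
    ring
  · -- Part 3: a.e. differential equation
    set g : ℝ → ℝ := fun σ => Real.exp (lam * σ) * h σ with hgdef
    set gt : ℝ → ℝ := Set.indicator (Set.Iic (0:ℝ)) g with hgt
    have hloc : LocallyIntegrable gt volume := by
      rw [locallyIntegrable_iff]
      intro K hK
      obtain ⟨r, hr⟩ := hK.isBounded.subset_closedBall 0
      have h1 : IntegrableOn g (Set.Iic 0 ∩ Metric.closedBall 0 r) volume := by
        apply (hg (-r - 1) 0 le_rfl).mono_set
        intro x hx
        obtain ⟨hx1, hx2⟩ := hx
        rw [Metric.mem_closedBall, Real.dist_eq, sub_zero] at hx2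
        constructor
        · have := abs_le.mp hx2
          linarith [this.1]
        · exact hx1
      have h2 : IntegrableOn gt (Metric.closedBall 0 r) volume := by
        rw [hgt, IntegrableOn, integrable_indicator_iff measurableSet_Iic, IntegrableOn,
          Measure.restrict_restrict measurableSet_Iic]
        exact h1
      exact h2.mono_set hr
    have haux := stmt5_aux_lebesgue gt hloc 0
    set B : ℝ → ℝ := fun t => ∫ s in (0:ℝ)..t, gt s with hB
    have hub : ∀ t ≤ (0:ℝ), u t = Real.exp (-(lam * t)) * B t := by
      intro t ht
      rw [hu' t]
      have e1 : ∫ σ in Set.Ioc t 0, g σ = ∫ σ in Set.Ioc t 0, gt σ :=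
        setIntegral_congr_fun measurableSet_Ioc
          (fun σ hσ => (Set.indicator_of_mem (show σ ∈ Set.Iic (0:ℝ) from hσ.2) g).symm)
      have e2 : ∫ σ in Set.Ioc t 0, gt σ = ∫ s in t..(0:ℝ), gt s :=
        (intervalIntegral.integral_of_le ht).symm
      rw [show (∫ σ in Set.Ioc t 0, Real.exp (lam * σ) * h σ) = ∫ σ in Set.Ioc t 0, g σ from rfl,
        e1, e2, intervalIntegral.integral_symm]
      rw [hB]
      ring
    have h0 : ∀ᵐ τ : ℝ, τ ≠ (0:ℝ) := by
      rw [ae_iff]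
      have : {a : ℝ | ¬a ≠ 0} = {0} := by ext x; simp
      rw [this]
      exact measure_singleton 0
    filter_upwards [haux, h0] with τ hd hne hle
    have hτ : τ < 0 := lt_of_le_of_ne hle hne
    have hgteq : gt τ = Real.exp (lam * τ) * h τ := by
      rw [hgt, Set.indicator_of_mem (show τ ∈ Set.Iic (0:ℝ) from hle)]
    have hBd : HasDerivAt B (Real.exp (lam * τ) * h τ) τ := by
      rw [← hgteq]; exact hd
    have hEd : HasDerivAt (fun t : ℝ => Real.exp (-(lam * t)))
        (Real.exp (-(lam * τ)) * (-lam)) τ := by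
      have h1 : HasDerivAt (fun t : ℝ => -(lam * t)) (-lam) τ := by
        simpa using ((hasDerivAt_id τ).const_mul lam).fun_neg
      exact h1.exp
    have hprod := hEd.mul hBd
    have hev : u =ᶠ[nhds τ] fun t => Real.exp (-(lam * t)) * B t := by
      filter_upwards [Iio_mem_nhds hτ] with t ht
      exact hub t (le_of_lt ht)
    have hfinal := hprod.congr_of_eventuallyEq hev
    refine hfinal.congr_deriv ?_
    rw [hub τ hle]
    have : Real.exp (-(lam * τ)) * (Real.exp (lam * τ) * h τ) = h τ := by
      rw [← mul_assoc, ← Real.exp_add, show -(lam * τ) + lam * τ = 0 by ring, Real.exp_zero,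
        one_mul]
    rw [this]
    ring
  · -- Part 4: decay bound
    intro τ hτ
    set d := 2 * (-lam - δ) with hd
    have hdpos : 0 < d := by rw [hd]; linarith
    set c := 2 * lam + 2 * δ with hc
    have hcneg : c < 0 := by rw [hc]; linarith
    rw [hu τ, abs_neg]
    set A := Set.Ioc τ (0:ℝ) with hA
    haveI := hfinmeas τ 0
    have hAsub : A ⊆ Set.Iic 0 := fun x hx => hx.2
    have hf1cont : Continuous (fun σ : ℝ => Real.exp (lam * (σ - τ) + δ * σ)) :=
      ((continuous_const.mul (continuous_id.sub continuous_const)).add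
        (continuous_const.mul continuous_id)).rexp
    have habs : |∫ σ in A, Real.exp (lam * (σ - τ)) * h σ|
        ≤ ∫ σ in A, Real.exp (lam * (σ - τ) + δ * σ) * |Real.exp (-δ * σ) * h σ| := by
      rw [← Real.norm_eq_abs]
      refine le_trans (norm_integral_le_integral_norm _) ?_
      apply le_of_eq
      apply integral_congr_ae
      filter_upwards with σ
      rw [Real.norm_eq_abs, abs_mul, abs_of_pos (Real.exp_pos _), abs_mul,
        abs_of_pos (Real.exp_pos _), ← mul_assoc, ← Real.exp_add]
      have : lam * (σ - τ) + δ * σ + -δ * σ = lam * (σ - τ) := by ring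
      rw [this]
    have hconj : Real.HolderConjugate 2 2 := Real.HolderConjugate.two_two
    have h2e : ENNReal.ofReal (2:ℝ) = 2 := by norm_num
    have hmem1 : MemLp (fun σ => Real.exp (lam * (σ - τ) + δ * σ)) (ENNReal.ofReal 2)
        (volume.restrict A) := by
      rw [h2e]
      refine (memLp_two_iff_integrable_sq hf1cont.aestronglyMeasurable).mpr ?_
      exact (hf1cont.pow 2).integrableOn_Ioc
    have hmem2 : MemLp (fun σ => |Real.exp (-δ * σ) * h σ|) (ENNReal.ofReal 2)
        (volume.restrict A) := by
      rw [h2e]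
      refine (memLp_two_iff_integrable_sq hφm.abs.aestronglyMeasurable).mpr ?_
      have : (fun σ => |Real.exp (-δ * σ) * h σ| ^ 2) = fun σ => (Real.exp (-δ * σ) * h σ) ^ 2 := by
        funext σ; rw [sq_abs]
      rw [this]
      exact hφsq.mono_set hAsub
    have hHold := integral_mul_le_Lp_mul_Lq_of_nonneg hconj
      (Eventually.of_forall (fun σ => (Real.exp_pos _).le))
      (Eventually.of_forall (fun σ => abs_nonneg _)) hmem1 hmem2
    have hE1eq : (∫ σ in A, (Real.exp (lam * (σ - τ) + δ * σ)) ^ (2:ℝ))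
        = Real.exp (-(2 * lam * τ)) * ((Real.exp (c * 0) - Real.exp (c * τ)) / c) := by
      have hptw : ∀ σ : ℝ, (Real.exp (lam * (σ - τ) + δ * σ)) ^ (2:ℝ)
          = Real.exp (-(2 * lam * τ)) * Real.exp (c * σ) := by
        intro σ
        rw [Real.rpow_def_of_pos (Real.exp_pos _), Real.log_exp, ← Real.exp_add]
        congr 1
        rw [hc]; ring
      simp only [hptw]
      rw [integral_const_mul]
      congr 1
      rw [hA, ← intervalIntegral.integral_of_le hτ]
      rw [intervalIntegral.integral_comp_mul_left (fun x => Real.exp x) (ne_of_lt hcneg)]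
      rw [integral_exp, smul_eq_mul, inv_mul_eq_div]
    have hE1 : (∫ σ in A, (Real.exp (lam * (σ - τ) + δ * σ)) ^ (2:ℝ))
        ≤ Real.exp (2 * δ * τ) / d := by
      rw [hE1eq]
      have hkey : Real.exp (-(2 * lam * τ)) * Real.exp (c * τ) = Real.exp (2 * δ * τ) := by
        rw [← Real.exp_add]; congr 1; rw [hc]; ring
      have hcd : c = -d := by rw [hc, hd]; ring
      have hepos := Real.exp_pos (-(2 * lam * τ))
      have he2 := Real.exp_pos (c * τ)
      rw [mul_zero, Real.exp_zero]
      have heq : Real.exp (-(2 * lam * τ)) * ((1 - Real.exp (c * τ)) / c)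
          = (Real.exp (-(2 * lam * τ)) * Real.exp (c * τ) - Real.exp (-(2 * lam * τ))) / d := by
        rw [hcd, div_neg, ← neg_div, neg_sub, ← mul_div_assoc, mul_sub, mul_one]
      rw [heq, hkey]
      have hstep : Real.exp (2 * δ * τ) - Real.exp (-(2 * lam * τ)) ≤ Real.exp (2 * δ * τ) := by
        linarith
      exact div_le_div_of_nonneg_right hstep hdpos.le
    have hE2 : (∫ σ in A, (|Real.exp (-δ * σ) * h σ|) ^ (2:ℝ)) ≤ M ^ 2 := by
      have hptw : ∀ σ : ℝ, (|Real.exp (-δ * σ) * h σ|) ^ (2:ℝ)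
          = Real.exp (-2 * δ * σ) * h σ ^ 2 := by
        intro σ
        rw [Real.rpow_two, sq_abs]
        exact congrFun hφsqeq σ
      simp only [hptw]
      rw [← hM2]
      apply setIntegral_mono_set hfin
      · filter_upwards with σ
        positivity
      · exact HasSubset.Subset.eventuallyLE hAsub
    have hE1nn : (0:ℝ) ≤ ∫ σ in A, (Real.exp (lam * (σ - τ) + δ * σ)) ^ (2:ℝ) :=
      setIntegral_nonneg measurableSet_Ioc (fun σ _ => by positivity)
    have hE2nn : (0:ℝ) ≤ ∫ σ in A, (|Real.exp (-δ * σ) * h σ|) ^ (2:ℝ) :=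
      setIntegral_nonneg measurableSet_Ioc (fun σ _ => by positivity)
    calc |∫ σ in A, Real.exp (lam * (σ - τ)) * h σ|
        ≤ ∫ σ in A, Real.exp (lam * (σ - τ) + δ * σ) * |Real.exp (-δ * σ) * h σ| := habs
      _ ≤ (∫ σ in A, (Real.exp (lam * (σ - τ) + δ * σ)) ^ (2:ℝ)) ^ ((1:ℝ)/2)
          * (∫ σ in A, (|Real.exp (-δ * σ) * h σ|) ^ (2:ℝ)) ^ ((1:ℝ)/2) := hHold
      _ ≤ (Real.exp (2 * δ * τ) / d) ^ ((1:ℝ)/2) * (M ^ 2 : ℝ) ^ ((1:ℝ)/2) := by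
          apply mul_le_mul (Real.rpow_le_rpow hE1nn hE1 (by norm_num))
            (Real.rpow_le_rpow hE2nn hE2 (by norm_num))
            (Real.rpow_nonneg hE2nn _) (Real.rpow_nonneg (by positivity) _)
      _ = d ^ (-(1:ℝ)/2) * Real.exp (δ * τ) * M := by
          have hM2half : ((M:ℝ) ^ 2) ^ ((1:ℝ)/2) = M := by
            rw [show (M ^ 2 : ℝ) = M ^ ((2:ℕ):ℝ) from (Real.rpow_natCast M 2).symm,
              show ((2:ℕ):ℝ) = (2:ℝ) by norm_num, ← Real.rpow_mul hM,
              show ((2:ℝ) * ((1:ℝ)/2)) = 1 by norm_num, Real.rpow_one]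
          rw [hM2half]
          rw [Real.div_rpow (Real.exp_pos _).le hdpos.le]
          rw [Real.rpow_def_of_pos (Real.exp_pos _), Real.log_exp,
            show (2 * δ * τ) * ((1:ℝ)/2) = δ * τ by ring]
          have hneg : d ^ (-(1:ℝ)/2) = (d ^ ((1:ℝ)/2))⁻¹ := by
            rw [show (-(1:ℝ)/2) = -((1:ℝ)/2) by norm_num, Real.rpow_neg hdpos.le]
          rw [hneg, div_eq_mul_inv]
          ring
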